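/- Let G be a finite simple graph that is bipartite (i.e., admits a proper 2-coloring of its vertices) and N-regular for some N ≥ 1. Then G admits a 1-factorization: there exist N spanning subgraphs M₁, …, M_N of G, each of which is a perfect matching, whose edge sets are pairwise disjoint and whose union is the edge set of G. -/

import Mathlib

/-- A set `M` of edges of a simple graph `G` is a perfect matching if every
vertex is incident to exactly one edge of `M`. -/
def IsPerfectMatchingSet {V : Type*} (G : SimpleGraph V) (M : Set (Sym2 V)) : Prop :=
  M ⊆ G.edgeSet ∧ ∀ v : V, ∃! e, e ∈ M ∧ v ∈ e

section aux
variable {V : Type*} [Fintype V]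

lemma exists_pm (G : SimpleGraph V) [DecidableRel G.Adj] (N : ℕ) (hN : 1 ≤ N)
    (hbip : G.Colorable 2) (hreg : G.IsRegularOfDegree N) :
    ∃ M : Set (Sym2 V), IsPerfectMatchingSet G M := by
  classical
  obtain ⟨C⟩ := hbip
  have key : ∀ i : Fin 2, ∃ f : {v : V // C v = i} → V,
      Function.Injective f ∧ ∀ a, G.Adj a.val (f a) := by
    intro i
    set t : {v : V // C v = i} → Finset V := fun a => G.neighborFinset a.val with ht
    have hall : ∀ s : Finset {v : V // C v = i}, s.card ≤ (s.biUnion t).card := by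
      intro s
      have hmul : N * s.card ≤ N * (s.biUnion t).card := by
        set T := s.biUnion t with hT
        have h1 : N * s.card = ∑ a ∈ s, (t a).card := by
          have hc : ∀ a ∈ s, (t a).card = N := fun a _ => hreg a.val
          rw [Finset.sum_congr rfl hc, Finset.sum_const, smul_eq_mul, mul_comm]
        have h2 : ∀ a ∈ s, (t a).card = (T.filter (· ∈ t a)).card := by
          intro a ha
          rw [Finset.filter_mem_eq_inter,
            Finset.inter_eq_right.mpr (Finset.subset_biUnion_of_mem t ha)]
        have h3 : ∑ a ∈ s, (T.filter (· ∈ t a)).card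
            = ∑ b ∈ T, (s.filter (fun a => b ∈ t a)).card := by
          simp only [Finset.card_filter]
          exact Finset.sum_comm
        have h4 : ∀ b ∈ T, (s.filter (fun a => b ∈ t a)).card ≤ N := by
          intro b _
          have hle : (s.filter (fun a => b ∈ t a)).card ≤ (G.neighborFinset b).card := by
            apply Finset.card_le_card_of_injOn (fun a => a.val)
            · intro a ha
              simp only [Finset.mem_coe, Finset.mem_filter] at ha ⊢
              have := ha.2
              rw [ht] at this
              rw [SimpleGraph.mem_neighborFinset] at this ⊢
              exact this.symm
            · intro x _ y _ h
              exact Subtype.ext h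
          simpa [hreg b] using hle
        calc N * s.card = ∑ a ∈ s, (t a).card := h1
          _ = ∑ a ∈ s, (T.filter (· ∈ t a)).card := Finset.sum_congr rfl h2
          _ = ∑ b ∈ T, (s.filter (fun a => b ∈ t a)).card := h3
          _ ≤ ∑ _b ∈ T, N := Finset.sum_le_sum h4
          _ = N * T.card := by rw [Finset.sum_const, smul_eq_mul, mul_comm]
      exact Nat.le_of_mul_le_mul_left hmul hN
    obtain ⟨f, hfinj, hf⟩ := (Finset.all_card_le_biUnion_card_iff_exists_injective t).mp hall
    exact ⟨f, hfinj, fun a => (SimpleGraph.mem_neighborFinset _ _ _).mp (hf a)⟩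
  obtain ⟨f, hfinj, hfadj⟩ := key 0
  obtain ⟨g, hginj, hgadj⟩ := key 1
  have hCf : ∀ a : {v : V // C v = 0}, C (f a) = 1 := by
    intro a
    have h := C.valid (hfadj a)
    rw [a.2] at h
    omega
  have hCg : ∀ b : {v : V // C v = 1}, C (g b) = 0 := by
    intro b
    have h := C.valid (hgadj b)
    rw [b.2] at h
    omega
  have hcard : Fintype.card {v : V // C v = 0} = Fintype.card {v : V // C v = 1} :=
    le_antisymm
      (Fintype.card_le_of_injective (fun a => (⟨f a, hCf a⟩ : {v : V // C v = 1}))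
        (fun x y h => hfinj (congrArg Subtype.val h)))
      (Fintype.card_le_of_injective (fun b => (⟨g b, hCg b⟩ : {v : V // C v = 0}))
        (fun x y h => hginj (congrArg Subtype.val h)))
  have hbij : Function.Bijective (fun a => (⟨f a, hCf a⟩ : {v : V // C v = 1})) :=
    (Fintype.bijective_iff_injective_and_card _).mpr
      ⟨fun x y h => hfinj (congrArg Subtype.val h), hcard⟩
  refine ⟨{e | ∃ a : {v : V // C v = 0}, e = s(a.val, f a)}, ?_, ?_⟩
  · rintro e ⟨a, rfl⟩
    exact hfadj a
  · intro v
    have hv : C v = 0 ∨ C v = 1 := by omega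
    rcases hv with hv | hv
    · refine ⟨s(v, f ⟨v, hv⟩), ⟨⟨⟨v, hv⟩, rfl⟩, Sym2.mem_mk_left _ _⟩, ?_⟩
      rintro e ⟨⟨a, rfl⟩, hve⟩
      rcases Sym2.mem_iff.mp hve with h | h
      · have ha : a = ⟨v, hv⟩ := Subtype.ext h.symm
        rw [ha]
      · exfalso
        have hc := hCf a
        rw [← h, hv] at hc
        exact absurd hc (by decide)
    · obtain ⟨a, ha⟩ := hbij.2 ⟨v, hv⟩
      have hfa : f a = v := congrArg Subtype.val ha
      refine ⟨s(a.val, f a), ⟨⟨a, rfl⟩, by rw [hfa]; exact Sym2.mem_mk_right _ _⟩, ?_⟩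
      rintro e ⟨⟨a', rfl⟩, hve⟩
      rcases Sym2.mem_iff.mp hve with h | h
      · exfalso
        have := a'.2
        rw [← h] at this
        rw [this] at hv
        exact absurd hv (by decide)
      · have : a' = a := hfinj (by rw [← h, hfa])
        rw [this]

lemma degree_eq_ncard (G : SimpleGraph V) [DecidableRel G.Adj] (v : V) :
    G.degree v = (G.neighborSet v).ncard := by
  rw [Set.ncard_eq_toFinset_card']
  rfl

lemma factor (N : ℕ) : ∀ (G : SimpleGraph V), G.Colorable 2 →
    (∀ v, (G.neighborSet v).ncard = N) →
    ∃ M : Fin N → Set (Sym2 V),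
      (∀ i, IsPerfectMatchingSet G (M i)) ∧
      (Pairwise fun i j => Disjoint (M i) (M j)) ∧
      (⋃ i, M i) = G.edgeSet := by
  induction N with
  | zero =>
    intro G _ hreg
    refine ⟨fun i => i.elim0, fun i => i.elim0, fun i => i.elim0, ?_⟩
    rw [Set.iUnion_of_empty]
    symm
    rw [Set.eq_empty_iff_forall_notMem]
    intro e he
    induction e with
    | _ u w =>
      have hadj : G.Adj u w := he
      have : w ∈ G.neighborSet u := hadj
      have h0 := hreg u
      rw [Set.ncard_eq_zero (Set.toFinite _)] at h0
      rw [h0] at this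
      exact this
  | succ N IH =>
    intro G hbip hreg
    classical
    letI : DecidableRel G.Adj := Classical.decRel _
    have hreg' : G.IsRegularOfDegree (N + 1) := fun v => by
      rw [degree_eq_ncard]; exact hreg v
    obtain ⟨M₀, hM₀sub, hM₀pm⟩ := exists_pm G (N + 1) (Nat.succ_le_succ (Nat.zero_le N)) hbip hreg'
    set G' := G.deleteEdges M₀ with hG'
    have hbip' : G'.Colorable 2 := hbip.mono_left (SimpleGraph.deleteEdges_le _)
    have hEG' : G'.edgeSet = G.edgeSet \ M₀ := SimpleGraph.edgeSet_deleteEdges _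
    have hreg'' : ∀ v, (G'.neighborSet v).ncard = N := by
      intro v
      obtain ⟨e, ⟨heM, hve⟩, huniq⟩ := hM₀pm v
      have heE : e ∈ G.edgeSet := hM₀sub heM
      set w := Sym2.Mem.other hve with hw
      have hsp : s(v, w) = e := Sym2.other_spec hve
      have hadj : G.Adj v w := by rw [← SimpleGraph.mem_edgeSet, hsp]; exact heE
      have hns : G'.neighborSet v = G.neighborSet v \ {w} := by
        ext u
        simp only [SimpleGraph.mem_neighborSet, hG', SimpleGraph.deleteEdges_adj,
          Set.mem_diff, Set.mem_singleton_iff]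
        constructor
        · rintro ⟨h1, h2⟩
          refine ⟨h1, fun huw => ?_⟩
          rw [huw, hsp] at h2
          exact h2 heM
        · rintro ⟨h1, h2⟩
          refine ⟨h1, fun hmem => ?_⟩
          have : s(v, u) = e := huniq s(v, u) ⟨hmem, Sym2.mem_mk_left _ _⟩
          rw [← hsp] at this
          exact h2 (Sym2.congr_right.mp this)
      have hwmem : w ∈ G.neighborSet v := hadj
      rw [hns, Set.ncard_diff_singleton_of_mem hwmem, hreg v]
      omega
    obtain ⟨M', hM'pm, hM'disj, hM'union⟩ := IH G' hbip' hreg''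
    have hsub : ∀ i, M' i ⊆ G.edgeSet \ M₀ := fun i => hEG' ▸ (hM'pm i).1
    set Mfun : Fin (N + 1) → Set (Sym2 V) := Fin.cons M₀ M' with hMfun
    refine ⟨Mfun, ?_, ?_, ?_⟩
    · intro i
      refine Fin.cases ?_ (fun j => ?_) i
      · exact ⟨hM₀sub, hM₀pm⟩
      · simp only [hMfun, Fin.cons_succ]
        exact ⟨fun e he => ((hsub j) he).1, (hM'pm j).2⟩
    · intro i j hij
      have hd0 : ∀ k, Disjoint M₀ (M' k) := by
        intro k
        rw [Set.disjoint_left]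
        intro e he he'
        exact ((hsub k) he').2 he
      revert hij
      refine Fin.cases ?_ (fun i' => ?_) i <;> refine Fin.cases ?_ (fun j' => ?_) j
      · intro h; exact absurd rfl h
      · intro _; simpa [hMfun] using hd0 j'
      · intro _; simpa [hMfun] using (hd0 i').symm
      · intro h
        simp only [hMfun, Fin.cons_succ]
        exact hM'disj (fun hh => h (by rw [hh]))
    · have hU : (⋃ i, Mfun i) = M₀ ∪ ⋃ i, M' i := by
        apply subset_antisymm
        · refine Set.iUnion_subset fun i => ?_
          refine Fin.cases ?_ (fun j => ?_) i
          · simp only [hMfun, Fin.cons_zero]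
            exact Set.subset_union_left
          · simp only [hMfun, Fin.cons_succ]
            exact (Set.subset_iUnion M' j).trans Set.subset_union_right
        · refine Set.union_subset ?_ ?_
          · have h0 : M₀ = Mfun 0 := by simp [hMfun]
            exact h0.le.trans (Set.subset_iUnion _ 0)
          · refine Set.iUnion_subset fun j => ?_
            have hj : M' j = Mfun j.succ := by simp [hMfun]
            exact hj.le.trans (Set.subset_iUnion _ j.succ)
      rw [hU, hM'union, hEG', Set.union_diff_cancel hM₀sub]

end aux

theorem bipartite_regular_one_factorization {V : Type*} [Fintype V]
    (G : SimpleGraph V) [DecidableRel G.Adj] (N : ℕ) (hN : 1 ≤ N)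
    (hbip : G.Colorable 2) (hreg : G.IsRegularOfDegree N) :
    ∃ M : Fin N → Set (Sym2 V),
      (∀ i, IsPerfectMatchingSet G (M i)) ∧
      (Pairwise fun i j => Disjoint (M i) (M j)) ∧
      (⋃ i, M i) = G.edgeSet := by
  exact factor N G hbip (fun v => by rw [← degree_eq_ncard]; exact hreg v)
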